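/- Let s > 0, let f : ℝ → ℝ be defined by f(x) = Σ_{j=3}^∞ 2^{−js} cos((11/8)·2^j·x), and for n ≥ 3 set λ_n = 1 + 1/n and τ_n = 8nπ/(11·2^n). Then the Fourier coefficient of the 2π-periodic function x ↦ f(x − λ_n τ_n) − f(x − τ_n) at the frequency 11·2^{n−3}, with normalization ĝ(k) = (1/(2π)) ∫₀^{2π} g(x) e^{−ikx} dx, equals (−1)^{n+1}·2^{−ns}; in particular its absolute value is 2^{−ns}. -/

import Mathlib

set_option maxHeartbeats 1000000

open Real Complex MeasureTheory

private lemma exp_int_integral (ℓ : ℤ) :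
    ∫ x in (0:ℝ)..(2*π), Complex.exp ((ℓ:ℂ) * Complex.I * x) =
      if ℓ = 0 then ((2*π : ℝ):ℂ) else 0 := by
  rcases eq_or_ne ℓ 0 with h|h
  · simp [h]
  · rw [if_neg h]
    have hc : (ℓ:ℂ) * Complex.I ≠ 0 := by
      simp [Complex.I_ne_zero, h]
    rw [integral_exp_mul_complex hc]
    have h1 : Complex.exp ((ℓ:ℂ) * Complex.I * (2*(π:ℂ))) = 1 := by
      rw [show (ℓ:ℂ) * Complex.I * (2*(π:ℂ)) = ℓ * (2*π*Complex.I) by push_cast; ring]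
      exact Complex.exp_int_mul_two_pi_mul_I ℓ
    simp [Complex.ofReal_mul, h1]

private lemma cos_exp_integral (m k : ℕ) (hk : 0 < k) (a : ℝ) :
    ∫ x in (0:ℝ)..(2*π), ((Real.cos ((m:ℝ) * (x - a)) : ℝ) : ℂ) * Complex.exp (-Complex.I * (k:ℂ) * x)
      = if m = k then (π:ℂ) * Complex.exp (-Complex.I * (k:ℂ) * (a:ℂ)) else 0 := by
  have key : ∀ x : ℝ, ((Real.cos ((m:ℝ)*(x-a)) : ℝ):ℂ) * Complex.exp (-Complex.I*(k:ℂ)*x)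
      = (Complex.exp (-Complex.I*(m:ℂ)*(a:ℂ))/2) * Complex.exp ((Int.cast ((m:ℤ)-(k:ℤ)) : ℂ) * Complex.I * x)
      + (Complex.exp (Complex.I*(m:ℂ)*(a:ℂ))/2) * Complex.exp ((Int.cast (-(m:ℤ)-(k:ℤ)) : ℂ) * Complex.I * x) := by
    intro x
    have hcos : Complex.cos ((((m:ℝ)*(x-a)) : ℝ) : ℂ)
        = (Complex.exp (((((m:ℝ)*(x-a)):ℝ):ℂ)*Complex.I)
           + Complex.exp (-((((m:ℝ)*(x-a)):ℝ):ℂ)*Complex.I))/2 := rfl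
    rw [Complex.ofReal_cos, hcos, div_mul_eq_mul_div, add_mul, ← Complex.exp_add, ← Complex.exp_add]
    rw [show ((((m:ℝ)*(x-a)):ℝ):ℂ)*Complex.I + -Complex.I*(k:ℂ)*(x:ℂ)
          = (-Complex.I*(m:ℂ)*(a:ℂ)) + ((Int.cast ((m:ℤ)-(k:ℤ)) : ℂ)*Complex.I*(x:ℂ)) by push_cast; ring,
        show -((((m:ℝ)*(x-a)):ℝ):ℂ)*Complex.I + -Complex.I*(k:ℂ)*(x:ℂ)
          = (Complex.I*(m:ℂ)*(a:ℂ)) + ((Int.cast (-(m:ℤ)-(k:ℤ)) : ℂ)*Complex.I*(x:ℂ)) by push_cast; ring,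
        Complex.exp_add, Complex.exp_add]
    ring
  have hi : ∀ (c : ℂ) (ℓ : ℤ), IntervalIntegrable
      (fun x : ℝ => c * Complex.exp ((ℓ:ℂ) * Complex.I * x)) volume 0 (2*π) := by
    intro c ℓ
    apply Continuous.intervalIntegrable
    fun_prop
  rw [intervalIntegral.integral_congr (g := fun x : ℝ =>
      (Complex.exp (-Complex.I*(m:ℂ)*(a:ℂ))/2) * Complex.exp ((Int.cast ((m:ℤ)-(k:ℤ)) : ℂ) * Complex.I * x)
      + (Complex.exp (Complex.I*(m:ℂ)*(a:ℂ))/2) * Complex.exp ((Int.cast (-(m:ℤ)-(k:ℤ)) : ℂ) * Complex.I * x))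
      (fun x _ => key x),
    intervalIntegral.integral_add (hi _ _) (hi _ _),
    intervalIntegral.integral_const_mul, intervalIntegral.integral_const_mul,
    exp_int_integral, exp_int_integral]
  rcases eq_or_ne m k with h|h
  · subst h
    rw [if_pos (sub_self _), if_neg (by omega), if_pos rfl]
    push_cast
    ring
  · rw [if_neg (by omega), if_neg (by omega), if_neg h]
    simp

theorem stmt_11 (s : ℝ) (hs : 0 < s) (f : ℝ → ℝ)
    (hf : ∀ x : ℝ, f x = ∑' j : ℕ,
      (2 : ℝ) ^ (-(((j : ℝ) + 3)) * s) * Real.cos ((11 / 8) * 2 ^ (j + 3) * x))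
    (n : ℕ) (hn : 3 ≤ n) (lam τ : ℝ)
    (hlam : lam = 1 + 1 / (n : ℝ)) (hτ : τ = 8 * (n : ℝ) * π / (11 * 2 ^ n)) :
    (1 / (2 * (π : ℂ))) * (∫ x in (0:ℝ)..(2 * π),
        ((f (x - lam * τ) - f (x - τ) : ℝ) : ℂ)
          * Complex.exp (-Complex.I * ((11 * 2 ^ (n - 3) : ℕ) : ℂ) * (x : ℂ)))
      = (-1 : ℂ) ^ (n + 1) * ((2 : ℝ) ^ (-(n : ℝ) * s) : ℝ) ∧
    ‖(1 / (2 * (π : ℂ))) * ∫ x in (0:ℝ)..(2 * π),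
        ((f (x - lam * τ) - f (x - τ) : ℝ) : ℂ)
          * Complex.exp (-Complex.I * ((11 * 2 ^ (n - 3) : ℕ) : ℂ) * (x : ℂ))‖
      = (2 : ℝ) ^ (-(n : ℝ) * s) := by
  obtain ⟨d, rfl⟩ : ∃ d, n = d + 3 := ⟨n - 3, by omega⟩
  simp only [Nat.add_sub_cancel]
  set k : ℕ := 11 * 2 ^ d with hkdef
  have hk0 : 0 < k := by positivity
  set c : ℕ → ℝ := fun j => (2:ℝ) ^ (-((j:ℝ)+3)*s) with hcdef
  set m : ℕ → ℕ := fun j => 11 * 2 ^ j with hmdef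
  have h2π : (0:ℝ) ≤ 2*π := by positivity
  -- summability of the coefficients
  have hr0 : (0:ℝ) ≤ (2:ℝ)^(-s) := Real.rpow_nonneg (by norm_num) _
  have hr1 : (2:ℝ)^(-s) < 1 :=
    Real.rpow_lt_one_of_one_lt_of_neg (by norm_num) (by linarith)
  have hcpow : ∀ j : ℕ, c j = ((2:ℝ)^(-s))^(j+3) := by
    intro j
    show (2:ℝ) ^ (-((j:ℝ)+3)*s) = _
    rw [← Real.rpow_natCast ((2:ℝ)^(-s)) (j+3), ← Real.rpow_mul (by norm_num)]
    congr 1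
    push_cast
    ring
  have hcnonneg : ∀ j, 0 ≤ c j := fun j => Real.rpow_nonneg (by norm_num) _
  have hsum : Summable c := by
    have : Summable (fun j : ℕ => ((2:ℝ)^(-s))^j * ((2:ℝ)^(-s))^3) :=
      (summable_geometric_of_lt_one hr0 hr1).mul_right _
    refine this.congr fun j => ?_
    rw [hcpow, pow_add]
  -- rewrite f
  have hfa : ∀ a x : ℝ, f (x - a) = ∑' j : ℕ, c j * Real.cos ((m j : ℝ) * (x - a)) := by
    intro a x
    rw [hf]
    refine tsum_congr fun j => ?_
    have harg : (11/8 : ℝ) * 2 ^ (j+3) * (x - a) = ((m j : ℕ):ℝ) * (x - a) := by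
      simp only [hmdef]
      push_cast
      rw [pow_add]
      norm_num
      left
      ring
    rw [harg]
  have hsummand : ∀ a x : ℝ, Summable (fun j => c j * Real.cos ((m j : ℝ) * (x - a))) := by
    intro a x
    refine Summable.of_norm_bounded hsum fun j => ?_
    rw [norm_mul, Real.norm_eq_abs, Real.norm_eq_abs, _root_.abs_of_nonneg (hcnonneg j)]
    calc c j * |Real.cos ((m j : ℝ) * (x - a))| ≤ c j * 1 :=
          mul_le_mul_of_nonneg_left (Real.abs_cos_le_one _) (hcnonneg j)
      _ = c j := mul_one _
  -- the termwise functions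
  set F : ℕ → ℝ → ℂ := fun j x =>
    ((c j * (Real.cos ((m j:ℝ)*(x - lam*τ)) - Real.cos ((m j:ℝ)*(x - τ))) : ℝ) : ℂ)
      * Complex.exp (-Complex.I * (k:ℂ) * x) with hFdef
  have hpt : ∀ x : ℝ, ((f (x - lam*τ) - f (x - τ) : ℝ):ℂ) * Complex.exp (-Complex.I*(k:ℂ)*x)
      = ∑' j, F j x := by
    intro x
    rw [hfa, hfa, ← Summable.tsum_sub (hsummand _ _) (hsummand _ _), Complex.ofReal_tsum, ← tsum_mul_right]
    refine tsum_congr fun j => ?_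
    simp only [hFdef]
    push_cast
    ring
  have hFcont : ∀ j, Continuous (F j) := by
    intro j
    simp only [hFdef]
    fun_prop
  have hFint : ∀ j, IntegrableOn (F j) (Set.Ioc (0:ℝ) (2*π)) volume :=
    fun j => (hFcont j).integrableOn_Ioc
  have hEabs : ∀ x : ℝ, ‖Complex.exp (-Complex.I * (k:ℂ) * x)‖ = 1 := by
    intro x
    rw [show -Complex.I*(k:ℂ)*(x:ℂ) = ((-((k:ℝ)*x) : ℝ):ℂ) * Complex.I by push_cast; ring,
      Complex.norm_exp_ofReal_mul_I]
  have hnormF : ∀ j x, ‖F j x‖ ≤ 2 * c j := by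
    intro j x
    simp only [hFdef]
    simp only [norm_mul, Complex.norm_real, Real.norm_eq_abs, abs_mul, hEabs, mul_one]
    rw [_root_.abs_of_nonneg (hcnonneg j)]
    have : |Real.cos ((m j:ℝ)*(x - lam*τ)) - Real.cos ((m j:ℝ)*(x - τ))| ≤ 2 := by
      have h1 := Real.abs_cos_le_one ((m j:ℝ)*(x - lam*τ))
      have h2 := Real.abs_cos_le_one ((m j:ℝ)*(x - τ))
      calc |Real.cos ((m j:ℝ)*(x - lam*τ)) - Real.cos ((m j:ℝ)*(x - τ))|
          ≤ |Real.cos ((m j:ℝ)*(x - lam*τ))| + |Real.cos ((m j:ℝ)*(x - τ))| := abs_sub _ _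
        _ ≤ 2 := by linarith
    calc c j * |Real.cos ((m j:ℝ)*(x - lam*τ)) - Real.cos ((m j:ℝ)*(x - τ))|
        ≤ c j * 2 := mul_le_mul_of_nonneg_left this (hcnonneg j)
      _ = 2 * c j := mul_comm _ _
  have hmeas : volume (Set.Ioc (0:ℝ) (2*π)) < ⊤ := by
    rw [Real.volume_Ioc]
    exact ENNReal.ofReal_lt_top
  have hFsum : Summable (fun j => ∫ x in Set.Ioc (0:ℝ) (2*π), ‖F j x‖) := by
    have hb : Summable (fun j => (2*π) * (2 * c j)) := ((hsum.mul_left 2).mul_left (2*π))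
    refine Summable.of_nonneg_of_le
      (fun j => integral_nonneg fun x => norm_nonneg _) (fun j => ?_) hb
    calc (∫ x in Set.Ioc (0:ℝ) (2*π), ‖F j x‖)
        ≤ ∫ _x in Set.Ioc (0:ℝ) (2*π), (2 * c j) := by
          refine integral_mono (hFint j).norm ?_ fun x => hnormF j x
          exact integrableOn_const hmeas.ne
      _ = (2*π) * (2 * c j) := by
          rw [setIntegral_const, measureReal_def, Real.volume_Ioc, smul_eq_mul]
          rw [ENNReal.toReal_ofReal (by linarith)]
          ring_nf
  -- termwise integrals
  set D : ℂ := (π:ℂ) * Complex.exp (-Complex.I*(k:ℂ)*((lam*τ:ℝ):ℂ))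
      - (π:ℂ) * Complex.exp (-Complex.I*(k:ℂ)*((τ:ℝ):ℂ)) with hDdef
  have hFj : ∀ j, (∫ x in Set.Ioc (0:ℝ) (2*π), F j x)
      = (c j : ℂ) * (if m j = k then D else 0) := by
    intro j
    rw [← intervalIntegral.integral_of_le h2π]
    have hptj : ∀ x : ℝ, F j x = (c j:ℂ) *
        ( ((Real.cos ((m j:ℝ)*(x - lam*τ)) : ℝ):ℂ) * Complex.exp (-Complex.I*(k:ℂ)*x)
          - ((Real.cos ((m j:ℝ)*(x - τ)) : ℝ):ℂ) * Complex.exp (-Complex.I*(k:ℂ)*x) ) := by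
      intro x
      simp only [hFdef]
      push_cast
      ring
    have hi1 : IntervalIntegrable (fun x : ℝ =>
        ((Real.cos ((m j:ℝ)*(x - lam*τ)) : ℝ):ℂ) * Complex.exp (-Complex.I*(k:ℂ)*x))
        volume 0 (2*π) := by
      apply Continuous.intervalIntegrable; fun_prop
    have hi2 : IntervalIntegrable (fun x : ℝ =>
        ((Real.cos ((m j:ℝ)*(x - τ)) : ℝ):ℂ) * Complex.exp (-Complex.I*(k:ℂ)*x))
        volume 0 (2*π) := by
      apply Continuous.intervalIntegrable; fun_prop
    rw [intervalIntegral.integral_congr (fun x _ => hptj x),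
      intervalIntegral.integral_const_mul, intervalIntegral.integral_sub hi1 hi2,
      cos_exp_integral _ _ hk0, cos_exp_integral _ _ hk0, hDdef]
    split_ifs with h
    · ring
    · simp
  -- evaluate the whole integral
  have hmk : ∀ j, m j = k ↔ j = d := by
    intro j
    simp only [hmdef, hkdef]
    constructor
    · intro h
      have h2 : (2:ℕ)^j = 2^d := by omega
      exact Nat.pow_right_injective (le_refl 2) h2
    · rintro rfl; rfl
  have hint : (∫ x in (0:ℝ)..(2*π),
      ((f (x - lam*τ) - f (x - τ) : ℝ):ℂ) * Complex.exp (-Complex.I*(k:ℂ)*x))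
      = (c d : ℂ) * D := by
    calc (∫ x in (0:ℝ)..(2*π),
          ((f (x - lam*τ) - f (x - τ) : ℝ):ℂ) * Complex.exp (-Complex.I*(k:ℂ)*x))
        = ∫ x in (0:ℝ)..(2*π), ∑' j, F j x :=
          intervalIntegral.integral_congr fun x _ => hpt x
      _ = ∫ x in Set.Ioc (0:ℝ) (2*π), ∑' j, F j x := intervalIntegral.integral_of_le h2π
      _ = ∑' j, ∫ x in Set.Ioc (0:ℝ) (2*π), F j x :=
          (integral_tsum_of_summable_integral_norm (fun j => hFint j) hFsum).symm
      _ = ∑' j, (c j : ℂ) * (if m j = k then D else 0) := tsum_congr hFj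
      _ = (c d : ℂ) * (if m d = k then D else 0) := by
          refine tsum_eq_single d fun j hj => ?_
          rw [if_neg (fun h => hj ((hmk j).mp h)), mul_zero]
      _ = (c d : ℂ) * D := by rw [if_pos ((hmk d).mpr rfl)]
  -- arithmetic of the phases
  have hd3 : ((d:ℝ)+3) ≠ 0 := by positivity
  have hkt : (k:ℝ) * τ = ((d:ℝ)+3) * π := by
    rw [hτ]; simp only [hkdef]
    push_cast
    rw [show (2:ℝ)^(d+3) = 2^d * 8 by rw [pow_add]; norm_num]
    have h2d : (2:ℝ)^d ≠ 0 := by positivity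
    field_simp
  have hklt : (k:ℝ) * (lam*τ) = ((d:ℝ)+4) * π := by
    rw [show (k:ℝ)*(lam*τ) = lam*((k:ℝ)*τ) by ring, hkt, hlam]
    push_cast
    field_simp
    ring
  have hexpneg : Complex.exp (-(π:ℂ)*Complex.I) = -1 := by
    rw [show -(π:ℂ)*Complex.I = -(π*Complex.I) by ring, Complex.exp_neg, Complex.exp_pi_mul_I]
    norm_num
  have hE1 : Complex.exp (-Complex.I*(k:ℂ)*((lam*τ:ℝ):ℂ)) = (-1:ℂ)^(d+4) := by
    rw [show -Complex.I*(k:ℂ)*((lam*τ:ℝ):ℂ) = ((d+4:ℕ):ℂ) * (-(π:ℂ)*Complex.I) by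
      calc -Complex.I*(k:ℂ)*((lam*τ:ℝ):ℂ) = -((((k:ℝ)*(lam*τ)) : ℝ):ℂ)*Complex.I := by
            push_cast; ring
        _ = -(((((d:ℝ)+4)*π) : ℝ):ℂ)*Complex.I := by rw [hklt]
        _ = ((d+4:ℕ):ℂ) * (-(π:ℂ)*Complex.I) := by push_cast; ring]
    rw [Complex.exp_nat_mul, hexpneg]
  have hE2 : Complex.exp (-Complex.I*(k:ℂ)*((τ:ℝ):ℂ)) = (-1:ℂ)^(d+3) := by
    rw [show -Complex.I*(k:ℂ)*((τ:ℝ):ℂ) = ((d+3:ℕ):ℂ) * (-(π:ℂ)*Complex.I) by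
      calc -Complex.I*(k:ℂ)*((τ:ℝ):ℂ) = -((((k:ℝ)*τ) : ℝ):ℂ)*Complex.I := by
            push_cast; ring
        _ = -(((((d:ℝ)+3)*π) : ℝ):ℂ)*Complex.I := by rw [hkt]
        _ = ((d+3:ℕ):ℂ) * (-(π:ℂ)*Complex.I) := by push_cast; ring]
    rw [Complex.exp_nat_mul, hexpneg]
  have hcd : ((c d : ℝ):ℂ) = (((2:ℝ) ^ (-((d+3:ℕ):ℝ) * s) : ℝ) : ℂ) := by
    norm_cast
    show (2:ℝ) ^ (-((d:ℝ)+3)*s) = _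
    congr 1
    push_cast
    ring
  have hπ : (π:ℂ) ≠ 0 := Complex.ofReal_ne_zero.mpr Real.pi_ne_zero
  have H : (1 / (2 * (π : ℂ))) * (∫ x in (0:ℝ)..(2 * π),
      ((f (x - lam * τ) - f (x - τ) : ℝ) : ℂ)
        * Complex.exp (-Complex.I * ((k : ℕ) : ℂ) * (x : ℂ)))
      = (-1 : ℂ) ^ ((d+3) + 1) * (((2 : ℝ) ^ (-((d+3:ℕ) : ℝ) * s) : ℝ) : ℂ) := by
    rw [hint, hDdef, hE1, hE2, hcd]
    rw [show (d+3)+1 = d+4 from rfl, show (-1:ℂ)^(d+4) = -(-1:ℂ)^(d+3) by rw [pow_succ]; ring]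
    field_simp
    ring
  constructor
  · exact H
  · rw [H]
    rw [norm_mul, norm_pow]
    simp only [norm_neg, norm_one, one_pow, one_mul, Complex.norm_real, Real.norm_eq_abs]
    exact _root_.abs_of_nonneg (Real.rpow_nonneg (by norm_num) _)
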